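/- Let f : ℝ → ℝ be continuous with f(u)u ≥ 2F(u) ≥ 0 for all u, where F(u) = ∫₀ᵘ f(t) dt, and suppose f(s) ≥ (f(u)/|u|)·|s| for all s ≥ u whenever u ≠ 0. Then for all u ≠ 0, all t ≥ 0, and all v ∈ ℝ: F(u) - F(tu + v) ≤ -((t² - 1)/2 · u + t·v) · f(u). -/

import Mathlib

open MeasureTheory intervalIntegral

lemma int_abs_aux (w : ℝ) : ∫ s in (0:ℝ)..w, |s| = w * |w| / 2 := by
  rcases le_or_gt 0 w with hw | hw
  · rw [intervalIntegral.integral_congr (g := fun s => s)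
      (fun s hs => abs_of_nonneg (by
        rcases Set.mem_uIcc.mp hs with h | h
        · exact h.1
        · linarith [h.1, h.2]))]
    rw [integral_id]
    rw [abs_of_nonneg hw]; ring
  · rw [intervalIntegral.integral_congr (g := fun s => -s)
      (fun s hs => abs_of_nonpos (by
        rcases Set.mem_uIcc.mp hs with h | h
        · linarith [h.1, h.2]
        · exact h.2))]
    rw [intervalIntegral.integral_neg, integral_id]
    rw [abs_of_neg hw]; ring

theorem stmt1 (f F : ℝ → ℝ) (hf : Continuous f)
    (hF : ∀ u : ℝ, F u = ∫ t in (0:ℝ)..u, f t)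
    (h1 : ∀ u : ℝ, f u * u ≥ 2 * F u ∧ 2 * F u ≥ 0)
    (h2 : ∀ u s : ℝ, u ≠ 0 → s ≥ u → f s ≥ (f u / |u|) * |s|) :
    ∀ u t v : ℝ, u ≠ 0 → t ≥ 0 →
      F u - F (t * u + v) ≤ -(((t ^ 2 - 1) / 2) * u + t * v) * f u := by
  intro u t v hu ht
  set c := f u / |u| with hc
  have habsu : |u| > 0 := abs_pos.mpr hu
  have hfu : f u = c * |u| := by rw [hc, div_mul_cancel₀ _ habsu.ne']
  have hint : ∀ a b : ℝ, IntervalIntegrable f volume a b :=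
    fun a b => hf.intervalIntegrable a b
  have hcint : ∀ a b : ℝ, IntervalIntegrable (fun s => c * |s|) volume a b :=
    fun a b => (continuous_const.mul continuous_abs).intervalIntegrable a b
  have hkey : ∀ a b : ℝ, F b - F a = ∫ s in a..b, f s := by
    intro a b
    rw [hF, hF, ← intervalIntegral.integral_add_adjacent_intervals (hint 0 a) (hint a b)]
    ring
  have hcval : ∀ a b : ℝ, (∫ s in a..b, c * |s|) = c * (b * |b| - a * |a|) / 2 := by
    intro a b
    rw [intervalIntegral.integral_const_mul]
    rw [← intervalIntegral.integral_interval_sub_left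
      (continuous_abs.intervalIntegrable 0 b) (continuous_abs.intervalIntegrable 0 a)]
    rw [int_abs_aux, int_abs_aux]; ring
  have hub : ∀ s, u ≤ s → c * |s| ≤ f s := fun s hs => h2 u s hu hs
  have hlb : ∀ s, s ≤ u → s ≠ 0 → f s ≤ c * |s| := by
    intro s hs hs0
    have h := h2 s u hs0 hs
    have habs : |s| > 0 := abs_pos.mpr hs0
    rw [ge_iff_le, div_mul_eq_mul_div, div_le_iff₀ habs] at h
    rw [hc, div_mul_eq_mul_div, le_div_iff₀ habsu]
    linarith
  have hA : ∀ w : ℝ, c * (w * |w| - u * |u|) / 2 ≤ F w - F u := by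
    intro w
    rcases le_total u w with huw | huw
    · rw [hkey, ← hcval]
      exact intervalIntegral.integral_mono_on huw (hcint u w) (hint u w)
        (fun s hs => hub s hs.1)
    · have h0 : ∀ᵐ s ∂(volume.restrict (Set.Icc w u)), f s ≤ c * |s| := by
        have hne : ∀ᵐ s ∂(volume.restrict (Set.Icc w u)), s ≠ (0:ℝ) := by
          apply ae_restrict_of_ae
          rw [MeasureTheory.ae_iff]
          have : {s : ℝ | ¬ s ≠ 0} = {0} := by ext s; simp
          rw [this, Real.volume_singleton]
        have hmem := MeasureTheory.ae_restrict_mem (μ := volume)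
          (measurableSet_Icc : MeasurableSet (Set.Icc w u))
        filter_upwards [hne, hmem] with s hs1 hs2
        exact hlb s hs2.2 hs1
      have := intervalIntegral.integral_mono_ae_restrict huw (hint w u) (hcint w u) h0
      rw [← hkey] at this
      rw [hcval] at this
      linarith
  clear_value c
  clear hc
  obtain ⟨hFu1, hFu2⟩ := h1 u
  obtain ⟨_, hFw2⟩ := h1 (t * u + v)
  have hAw := hA (t * u + v)
  rcases hu.lt_or_gt with hun | hup
  · -- u < 0, c ≤ 0
    have hau : |u| = -u := abs_of_neg hun
    rw [hau] at hAw hfu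
    have hcn : c ≤ 0 := by nlinarith [mul_pos (neg_pos.mpr hun) (neg_pos.mpr hun)]
    rw [hfu] at hFu1 ⊢
    rcases le_or_gt (t * u + v) 0 with hwn | hwp
    · have haw : |t * u + v| = -(t * u + v) := by
        rcases eq_or_lt_of_le hwn with h | h
        · rw [h]; simp
        · exact abs_of_neg h
      rw [haw] at hAw
      nlinarith [mul_nonneg (neg_nonneg.mpr hcn) (sq_nonneg v)]
    · nlinarith [mul_nonneg (mul_nonneg (neg_nonneg.mpr hcn)
          (mul_nonneg ht (neg_nonneg.mpr hun.le))) hwp.le,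
        mul_nonneg (neg_nonneg.mpr hcn) (sq_nonneg (t * u))]
  · -- u > 0, c ≥ 0
    have hau : |u| = u := abs_of_pos hup
    rw [hau] at hAw hfu
    have hcp : 0 ≤ c := by nlinarith [mul_pos hup hup]
    rw [hfu] at hFu1 ⊢
    rcases le_or_gt 0 (t * u + v) with hwp | hwn
    · have haw : |t * u + v| = t * u + v := abs_of_nonneg hwp
      rw [haw] at hAw
      nlinarith [mul_nonneg hcp (sq_nonneg v)]
    · nlinarith [mul_nonneg (mul_nonneg hcp (mul_nonneg ht hup.le))
          (neg_nonneg.mpr hwn.le),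
        mul_nonneg hcp (sq_nonneg (t * u))]
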